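/- Let T₁ be an m×m doubly stochastic matrix with eigenvalues 1, λ₂, ..., λ_m, and let T₂ be an n×n doubly stochastic matrix with eigenvalues 1, μ₂, ..., μ_n, with n ≥ m. Then for any nonnegative reals α and ρ not both zero, the (m+n)×(m+n) matrix D = (1/(α + ρn/√(mn))) · [[α T₁, ρ e_m e_nᵀ], [ρ e_n e_mᵀ, (α + ρ(n−m)/√(mn)) T₂]] is doubly stochastic, and its eigenvalues (counted with multiplicity) are 1, (α√(mn) − ρm)/(α√(mn) + ρn), (α/(α + ρn/√(mn)))λ₂, ..., (α/(α + ρn/√(mn)))λ_m, ((α√(mn) + ρ(n−m))/(α√(mn) + ρn))μ₂, ..., ((α√(mn) + ρ(n−m))/(α√(mn) + ρn))μ_n. -/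

import Mathlib

open Matrix Polynomial

section Helpers

lemma my_eval_charpoly {ι : Type*} [Fintype ι] [DecidableEq ι] (A : Matrix ι ι ℂ) (x : ℂ) :
    A.charpoly.eval x = (x • (1 : Matrix ι ι ℂ) - A).det := by
  rw [Matrix.charpoly, ← Polynomial.coe_evalRingHom, RingHom.map_det]
  congr 1
  ext i j
  simp [charmatrix_apply, Matrix.map_apply, Matrix.smul_apply, Matrix.one_apply, diagonal_apply,
    apply_ite (Polynomial.eval x)]

lemma my_charpoly_smul {ι : Type*} [Fintype ι] [DecidableEq ι] (A : Matrix ι ι ℂ) (c : ℂ) :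
    (c • A).charpoly = (A.charpoly.roots.map fun r => X - C (c * r)).prod := by
  have hcard : A.charpoly.roots.card = Fintype.card ι := by
    rw [← Matrix.charpoly_natDegree_eq_dim A]
    exact (Polynomial.splits_iff_card_roots.mp (IsAlgClosed.splits _))
  have hprod : A.charpoly = (A.charpoly.roots.map fun r => X - C r).prod :=
    (IsAlgClosed.splits _).eq_prod_roots_of_monic (A.charpoly_monic)
  apply Polynomial.eq_of_infinite_eval_eq
  apply Set.infinite_of_injective_forall_mem (f := fun x : ℂ => x)
    (hi := fun a b h => h)
  intro x
  show ((c • A).charpoly.eval x) = _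
  rw [my_eval_charpoly, Polynomial.eval_multiset_prod, Multiset.map_map]
  rcases eq_or_ne c 0 with hc | hc
  · subst hc
    simp only [zero_smul, sub_zero, zero_mul, Function.comp]
    rw [det_smul, det_one, mul_one]
    simp only [eval_sub, eval_X, eval_C, sub_zero]
    rw [Multiset.map_const', Multiset.prod_replicate, hcard]
  · have : x • (1 : Matrix ι ι ℂ) - c • A = c • ((c⁻¹ * x) • (1 : Matrix ι ι ℂ) - A) := by
      rw [smul_sub, smul_smul, mul_inv_cancel_left₀ hc]
    rw [this, det_smul, ← my_eval_charpoly]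
    conv_lhs => rw [hprod]
    rw [Polynomial.eval_multiset_prod, Multiset.map_map]
    simp only [Function.comp, eval_sub, eval_X, eval_C]
    rw [← hcard, ← Multiset.prod_replicate, ← Multiset.map_const', ← Multiset.prod_map_mul]
    congr 1
    apply Multiset.map_congr rfl
    intro r _
    field_simp

lemma my_roots_charpoly_smul {ι : Type*} [Fintype ι] [DecidableEq ι] (A : Matrix ι ι ℂ) (c : ℂ) :
    (c • A).charpoly.roots = A.charpoly.roots.map (fun r => c * r) := by
  have he : (fun r => X - C (c * r)) = (fun a : ℂ => X - C a) ∘ (fun r => c * r) := rfl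
  rw [my_charpoly_smul, he, ← Multiset.map_map, Polynomial.roots_multiset_prod_X_sub_C]


variable {ι₁ ι₂ : Type*} [Fintype ι₁] [Fintype ι₂] [DecidableEq ι₁] [DecidableEq ι₂]

lemma vecMul_inv_eq {A : Matrix ι₁ ι₁ ℂ} {u : ι₁ → ℂ} {y : ℂ} (hy : y ≠ 0)
    (hA : IsUnit A.det) (h : u ᵥ* A = y • u) : u ᵥ* A⁻¹ = y⁻¹ • u := by
  have h2 : (u ᵥ* A) ᵥ* A⁻¹ = u := by
    rw [vecMul_vecMul, Matrix.mul_nonsing_inv _ hA, vecMul_one]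
  rw [h, smul_vecMul] at h2
  calc u ᵥ* A⁻¹ = y⁻¹ • (y • (u ᵥ* A⁻¹)) := by
        rw [smul_smul, inv_mul_cancel₀ hy, one_smul]
    _ = y⁻¹ • u := by rw [h2]

lemma det_point_identity (S₁ : Matrix ι₁ ι₁ ℂ) (S₂ : Matrix ι₂ ι₂ ℂ)
    (u : ι₁ → ℂ) (v : ι₂ → ℂ) (a b r x : ℂ)
    (hu₂ : u ᵥ* S₁ = u) (huu : u ⬝ᵥ u = 1)
    (hv₂ : v ᵥ* S₂ = v) (hvv : v ⬝ᵥ v = 1)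
    (hxa : x ≠ a) (hxb : x ≠ b)
    (hd1 : IsUnit (x • (1 : Matrix ι₁ ι₁ ℂ) - a • S₁).det)
    (hd2 : IsUnit (x • (1 : Matrix ι₂ ι₂ ℂ) - b • S₂).det) :
    (x • (1 : Matrix (ι₁ ⊕ ι₂) (ι₁ ⊕ ι₂) ℂ) -
        fromBlocks (a • S₁) (r • vecMulVec u v) (r • vecMulVec v u) (b • S₂)).det
        * ((x - a) * (x - b)) =
      ((x - a) * (x - b) - r ^ 2) * (x • (1 : Matrix ι₁ ι₁ ℂ) - a • S₁).det
        * (x • (1 : Matrix ι₂ ι₂ ℂ) - b • S₂).det := by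
  set A₁ := x • (1 : Matrix ι₁ ι₁ ℂ) - a • S₁ with hA₁
  set A₂ := x • (1 : Matrix ι₂ ι₂ ℂ) - b • S₂ with hA₂
  have hu' : u ᵥ* A₁ = (x - a) • u := by
    rw [hA₁, vecMul_sub, sub_smul]
    congr 1
    · ext i; simp [vecMul, dotProduct, Matrix.one_apply, Finset.sum_ite_eq', mul_comm]
    · have : u ᵥ* (a • S₁) = a • (u ᵥ* S₁) := by
        ext i; simp [vecMul, dotProduct, Finset.mul_sum, Matrix.smul_apply, mul_left_comm]
      rw [this, hu₂]
  have hv' : v ᵥ* A₂ = (x - b) • v := by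
    rw [hA₂, vecMul_sub, sub_smul]
    congr 1
    · ext i; simp [vecMul, dotProduct, Matrix.one_apply, Finset.sum_ite_eq', mul_comm]
    · have : v ᵥ* (b • S₂) = b • (v ᵥ* S₂) := by
        ext i; simp [vecMul, dotProduct, Finset.mul_sum, Matrix.smul_apply, mul_left_comm]
      rw [this, hv₂]
  have hxa' : x - a ≠ 0 := sub_ne_zero.mpr hxa
  have hxb' : x - b ≠ 0 := sub_ne_zero.mpr hxb
  have huinv : u ᵥ* A₁⁻¹ = (x - a)⁻¹ • u := vecMul_inv_eq hxa' hd1 hu'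
  have hvinv : v ᵥ* A₂⁻¹ = (x - b)⁻¹ • v := vecMul_inv_eq hxb' hd2 hv'
  -- block decomposition
  have hblock : x • (1 : Matrix (ι₁ ⊕ ι₂) (ι₁ ⊕ ι₂) ℂ) -
      fromBlocks (a • S₁) (r • vecMulVec u v) (r • vecMulVec v u) (b • S₂) =
      fromBlocks A₁ (-(r • vecMulVec u v)) (-(r • vecMulVec v u)) A₂ := by
    ext i j
    rcases i with i | i <;> rcases j with j | j <;>
      simp [hA₁, hA₂, Matrix.sub_apply, Matrix.smul_apply, Matrix.one_apply,
        Matrix.fromBlocks]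
  haveI : Invertible A₁ := A₁.invertibleOfIsUnitDet hd1
  have hschur := Matrix.det_fromBlocks₁₁ A₁ (-(r • vecMulVec u v)) (-(r • vecMulVec v u)) A₂
  rw [invOf_eq_nonsing_inv] at hschur
  -- compute the Schur complement
  have hCAB : (-(r • vecMulVec v u)) * A₁⁻¹ * (-(r • vecMulVec u v)) =
      (r ^ 2 * (x - a)⁻¹) • vecMulVec v v := by
    rw [Matrix.neg_mul, Matrix.neg_mul, Matrix.mul_neg, neg_neg]
    rw [vecMulVec_eq Unit, vecMulVec_eq Unit, vecMulVec_eq Unit]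
    rw [Matrix.smul_mul, Matrix.smul_mul, Matrix.mul_smul, smul_smul]
    rw [Matrix.mul_assoc, Matrix.mul_assoc, ← Matrix.mul_assoc (replicateRow Unit u)]
    rw [← replicateRow_vecMul, huinv]
    have : replicateRow Unit ((x - a)⁻¹ • u) = (x - a)⁻¹ • replicateRow Unit u := by
      ext; simp
    have hmid : replicateRow Unit u * (replicateCol Unit u * replicateRow Unit v) = replicateRow Unit v := by
      rw [← Matrix.mul_assoc, replicateRow_mul_replicateCol, huu]
      have h1 : (of fun _ _ => (1 : ℂ) : Matrix Unit Unit ℂ) = 1 := by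
        ext i j; simp [Matrix.one_apply]
      rw [h1, Matrix.one_mul]
    rw [this, Matrix.smul_mul, hmid, Matrix.mul_smul, smul_smul]
    congr 1
    ring
  rw [hblock, hschur, hCAB]
  -- matrix determinant lemma on A₂ - k • vecMulVec v v
  set k := r ^ 2 * (x - a)⁻¹ with hk
  have hsub : A₂ - k • vecMulVec v v = A₂ + replicateCol Unit ((-k) • v) * replicateRow Unit v := by
    rw [replicateCol_smul, Matrix.smul_mul, ← vecMulVec_eq Unit, neg_smul, ← sub_eq_add_neg]
  have hdet2 := Matrix.det_add_replicateCol_mul_replicateRow (ι := Unit) hd2 ((-k) • v) v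
  rw [hsub, hdet2]
  have : (1 + replicateRow Unit v * A₂⁻¹ * replicateCol Unit ((-k) • v)).det = 1 - k * (x - b)⁻¹ := by
    rw [det_unique]
    simp only [Matrix.add_apply, Matrix.one_apply_eq]
    rw [← replicateRow_vecMul, hvinv]
    have h1 : replicateRow Unit ((x - b)⁻¹ • v) * replicateCol Unit ((-k) • v) =
        of fun _ _ => ((x - b)⁻¹ • v) ⬝ᵥ ((-k) • v) := replicateRow_mul_replicateCol _ _
    rw [h1]
    simp only [of_apply]
    rw [dotProduct_smul, smul_dotProduct, hvv]
    simp [smul_smul]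
    ring
  rw [this]
  have key : (1 - k * (x - b)⁻¹) * ((x - a) * (x - b)) = (x - a) * (x - b) - r ^ 2 := by
    rw [hk]
    field_simp
  linear_combination (A₁.det * A₂.det) * key

end Helpers

/-- A square real matrix is doubly stochastic if it is nonnegative and each row
and column sums to `1`. -/
def IsDoublyStochastic {ι : Type*} [Fintype ι] (T : Matrix ι ι ℝ) : Prop :=
  (∀ i j, 0 ≤ T i j) ∧ (∀ i, ∑ j, T i j = 1) ∧ (∀ j, ∑ i, T i j = 1)

set_option maxHeartbeats 2000000 in
theorem stmt_11 (m n : ℕ) (hmn : m ≤ n)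
    (T₁ : Matrix (Fin (m + 1)) (Fin (m + 1)) ℝ) (h₁ : IsDoublyStochastic T₁)
    (T₂ : Matrix (Fin (n + 1)) (Fin (n + 1)) ℝ) (h₂ : IsDoublyStochastic T₂)
    (lam : Fin m → ℂ) (mu : Fin n → ℂ)
    (hspec₁ : (T₁.map Complex.ofReal).charpoly.roots = 1 ::ₘ Finset.univ.val.map lam)
    (hspec₂ : (T₂.map Complex.ofReal).charpoly.roots = 1 ::ₘ Finset.univ.val.map mu)
    (α ρ : ℝ) (hα : 0 ≤ α) (hρ : 0 ≤ ρ) (hne : ¬(α = 0 ∧ ρ = 0))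
    (D : Matrix (Fin (m + 1) ⊕ Fin (n + 1)) (Fin (m + 1) ⊕ Fin (n + 1)) ℝ)
    (hD : D = (α + ρ * (n + 1) / Real.sqrt ((m + 1) * (n + 1)))⁻¹ •
      fromBlocks (α • T₁)
        (ρ • vecMulVec (fun _ : Fin (m + 1) => 1 / Real.sqrt (m + 1))
          (fun _ : Fin (n + 1) => 1 / Real.sqrt (n + 1)))
        (ρ • vecMulVec (fun _ : Fin (n + 1) => 1 / Real.sqrt (n + 1))
          (fun _ : Fin (m + 1) => 1 / Real.sqrt (m + 1)))
        ((α + ρ * ((n + 1 : ℝ) - (m + 1)) / Real.sqrt ((m + 1) * (n + 1))) • T₂)) :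
    IsDoublyStochastic D ∧
    (D.map Complex.ofReal).charpoly.roots
      = 1 ::ₘ (((α * Real.sqrt ((m + 1) * (n + 1)) - ρ * (m + 1)) /
            (α * Real.sqrt ((m + 1) * (n + 1)) + ρ * (n + 1)) : ℝ) : ℂ) ::ₘ
        ((Finset.univ.val.map fun i : Fin m =>
            ((α / (α + ρ * (n + 1) / Real.sqrt ((m + 1) * (n + 1))) : ℝ) : ℂ) * lam i)
          + (Finset.univ.val.map fun i : Fin n =>
            (((α * Real.sqrt ((m + 1) * (n + 1)) + ρ * ((n + 1 : ℝ) - (m + 1))) /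
              (α * Real.sqrt ((m + 1) * (n + 1)) + ρ * (n + 1)) : ℝ) : ℂ) * mu i)) := by
  obtain ⟨hT₁pos, hT₁row, hT₁col⟩ := h₁
  obtain ⟨hT₂pos, hT₂row, hT₂col⟩ := h₂
  have hM : (0:ℝ) < (m:ℝ) + 1 := by positivity
  have hN : (0:ℝ) < (n:ℝ) + 1 := by positivity
  have hMN : ((m:ℝ)+1) ≤ (n:ℝ)+1 := by
    have : (m:ℝ) ≤ (n:ℝ) := Nat.cast_le.mpr hmn
    linarith
  set s : ℝ := Real.sqrt (((m:ℝ) + 1) * ((n:ℝ) + 1)) with hsdef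
  have hs : (0:ℝ) < s := Real.sqrt_pos.mpr (by positivity)
  have hss : s * s = ((m:ℝ)+1) * ((n:ℝ)+1) := Real.mul_self_sqrt (by positivity)
  have hsm : Real.sqrt ((m:ℝ)+1) * Real.sqrt ((n:ℝ)+1) = s := (Real.sqrt_mul hM.le _).symm
  have hsqm : (0:ℝ) < Real.sqrt ((m:ℝ)+1) := Real.sqrt_pos.mpr hM
  have hsqn : (0:ℝ) < Real.sqrt ((n:ℝ)+1) := Real.sqrt_pos.mpr hN
  have hssm : Real.sqrt ((m:ℝ)+1) * Real.sqrt ((m:ℝ)+1) = (m:ℝ)+1 := Real.mul_self_sqrt hM.le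
  have hssn : Real.sqrt ((n:ℝ)+1) * Real.sqrt ((n:ℝ)+1) = (n:ℝ)+1 := Real.mul_self_sqrt hN.le
  set c : ℝ := α + ρ * ((n:ℝ) + 1) / s with hcdef
  have hc : (0:ℝ) < c := by
    rcases eq_or_lt_of_le hα with hα0 | hα0
    · have hρ0 : 0 < ρ := lt_of_le_of_ne hρ (fun h => hne ⟨hα0.symm, h.symm⟩)
      have : 0 < ρ * ((n:ℝ)+1)/s := by positivity
      rw [hcdef]; linarith
    · have : 0 ≤ ρ * ((n:ℝ)+1)/s := by positivity
      rw [hcdef]; linarith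
  set β : ℝ := α + ρ * (((n:ℝ) + 1) - ((m:ℝ) + 1)) / s with hβdef
  have hβ : 0 ≤ β := by
    have h0 : 0 ≤ ρ * (((n:ℝ)+1) - ((m:ℝ)+1)) / s :=
      div_nonneg (mul_nonneg hρ (by linarith)) hs.le
    rw [hβdef]; linarith
  have hden : (0:ℝ) < α * s + ρ * ((n:ℝ)+1) := by
    rcases eq_or_lt_of_le hα with hα0 | hα0
    · have hρ0 : 0 < ρ := lt_of_le_of_ne hρ (fun h => hne ⟨hα0.symm, h.symm⟩)
      have : 0 < ρ * ((n:ℝ)+1) := by positivity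
      nlinarith
    · nlinarith
  have huv : (1 / Real.sqrt ((m:ℝ)+1)) * (1 / Real.sqrt ((n:ℝ)+1)) = 1 / s := by
    rw [div_mul_div_comm, one_mul, hsm]
  constructor
  · -- doubly stochastic
    subst hD
    refine ⟨?_, ?_, ?_⟩
    · rintro (i | i) (j | j) <;>
        simp only [Matrix.smul_apply, fromBlocks_apply₁₁, fromBlocks_apply₁₂,
          fromBlocks_apply₂₁, fromBlocks_apply₂₂, vecMulVec_apply, smul_eq_mul]
      · exact mul_nonneg (inv_nonneg.mpr hc.le) (mul_nonneg hα (hT₁pos i j))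
      · exact mul_nonneg (inv_nonneg.mpr hc.le) (mul_nonneg hρ (by positivity))
      · exact mul_nonneg (inv_nonneg.mpr hc.le) (mul_nonneg hρ (by positivity))
      · exact mul_nonneg (inv_nonneg.mpr hc.le) (mul_nonneg hβ (hT₂pos i j))
    · rintro (i | i) <;>
        rw [Fintype.sum_sum_type] <;>
        simp only [Matrix.smul_apply, fromBlocks_apply₁₁, fromBlocks_apply₁₂,
          fromBlocks_apply₂₁, fromBlocks_apply₂₂, vecMulVec_apply, smul_eq_mul]
      · rw [Finset.sum_const, Finset.card_univ, Fintype.card_fin, ← Finset.mul_sum,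
          ← Finset.mul_sum, hT₁row i, nsmul_eq_mul, huv]
        push_cast
        have : c⁻¹ * (α * 1) + ((n:ℝ)+1) * (c⁻¹ * (ρ * (1/s))) = c⁻¹ * c := by
          rw [hcdef]; field_simp
        rw [this, inv_mul_cancel₀ hc.ne']
      · rw [Finset.sum_const, Finset.card_univ, Fintype.card_fin, ← Finset.mul_sum,
          ← Finset.mul_sum, hT₂row i, nsmul_eq_mul]
        have huv' : (1 / Real.sqrt ((n:ℝ)+1)) * (1 / Real.sqrt ((m:ℝ)+1)) = 1 / s := by
          rw [div_mul_div_comm, one_mul, mul_comm, hsm]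
        rw [huv']
        push_cast
        have : ((m:ℝ)+1) * (c⁻¹ * (ρ * (1/s))) + c⁻¹ * (β * 1) = c⁻¹ * c := by
          rw [hcdef, hβdef]; field_simp; ring
        rw [this, inv_mul_cancel₀ hc.ne']
    · rintro (j | j) <;>
        rw [Fintype.sum_sum_type] <;>
        simp only [Matrix.smul_apply, fromBlocks_apply₁₁, fromBlocks_apply₁₂,
          fromBlocks_apply₂₁, fromBlocks_apply₂₂, vecMulVec_apply, smul_eq_mul]
      · rw [Finset.sum_const, Finset.card_univ, Fintype.card_fin, ← Finset.mul_sum,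
          ← Finset.mul_sum, hT₁col j, nsmul_eq_mul]
        have huv' : (1 / Real.sqrt ((n:ℝ)+1)) * (1 / Real.sqrt ((m:ℝ)+1)) = 1 / s := by
          rw [div_mul_div_comm, one_mul, mul_comm, hsm]
        rw [huv']
        push_cast
        have : c⁻¹ * (α * 1) + ((n:ℝ)+1) * (c⁻¹ * (ρ * (1/s))) = c⁻¹ * c := by
          rw [hcdef]; field_simp
        rw [this, inv_mul_cancel₀ hc.ne']
      · rw [Finset.sum_const, Finset.card_univ, Fintype.card_fin, ← Finset.mul_sum,
          ← Finset.mul_sum, hT₂col j, nsmul_eq_mul, huv]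
        push_cast
        have : ((m:ℝ)+1) * (c⁻¹ * (ρ * (1/s))) + c⁻¹ * (β * 1) = c⁻¹ * c := by
          rw [hcdef, hβdef]; field_simp; ring
        rw [this, inv_mul_cancel₀ hc.ne']
  · -- spectrum
    have hcs : c * s = α * s + ρ * ((n:ℝ)+1) := by
      rw [hcdef]; field_simp
    have hbb : β / c = (α * s + ρ * (((n:ℝ)+1) - ((m:ℝ)+1))) / (α * s + ρ * ((n:ℝ)+1)) := by
      rw [hβdef, hcdef]
      rw [div_eq_div_iff (by rw [← hcdef]; exact hc.ne') hden.ne']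
      field_simp
    set aR : ℝ := α / c with haR
    set tR : ℝ := (α * s - ρ * ((m:ℝ)+1)) / (α * s + ρ * ((n:ℝ)+1)) with htR
    set bG : ℝ := (α * s + ρ * (((n:ℝ)+1) - ((m:ℝ)+1))) / (α * s + ρ * ((n:ℝ)+1)) with hbGdef
    have haR2 : aR = (α * s) / (α * s + ρ * ((n:ℝ)+1)) := by
      rw [haR, ← hcs, mul_comm c s, mul_comm α s, mul_div_mul_left _ _ hs.ne']
    have hsum : aR + bG = 1 + tR := by
      rw [haR2, hbGdef, htR]
      field_simp
      ring
    have hr2 : (ρ/c)^2 = (ρ * ρ * (((m:ℝ)+1)*((n:ℝ)+1)))/((α*s+ρ*((n:ℝ)+1))^2) := by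
      rw [← hss, ← hcs]
      field_simp
    have hprod : aR * bG - (ρ/c)^2 = tR := by
      rw [haR2, hbGdef, htR, hr2]
      rw [div_mul_div_comm, div_sub_div _ _ (by positivity) (by positivity),
        div_eq_div_iff (by positivity) hden.ne']
      ring
    set S₁ := T₁.map Complex.ofReal with hS₁
    set S₂ := T₂.map Complex.ofReal with hS₂
    set uC : Fin (m+1) → ℂ := fun _ => ((1 / Real.sqrt ((m:ℝ)+1) : ℝ) : ℂ) with huC
    set vC : Fin (n+1) → ℂ := fun _ => ((1 / Real.sqrt ((n:ℝ)+1) : ℝ) : ℂ) with hvC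
    set aC : ℂ := ((aR : ℝ) : ℂ) with haC
    set bC : ℂ := ((bG : ℝ) : ℂ) with hbC
    set rC : ℂ := ((ρ / c : ℝ) : ℂ) with hrC
    set tC : ℂ := ((tR : ℝ) : ℂ) with htC
    -- block form of the complexified matrix
    have hDC : D.map Complex.ofReal =
        fromBlocks (aC • S₁) (rC • vecMulVec uC vC) (rC • vecMulVec vC uC) (bC • S₂) := by
      rw [hD]
      ext i j
      rcases i with i | i <;> rcases j with j | j <;>
        simp only [Matrix.map_apply, Matrix.smul_apply, fromBlocks_apply₁₁, fromBlocks_apply₁₂,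
          fromBlocks_apply₂₁, fromBlocks_apply₂₂, vecMulVec_apply, smul_eq_mul,
          hS₁, hS₂, huC, hvC, haC, hbC, hrC]
      · rw [haR]; push_cast; ring
      · push_cast; ring
      · push_cast; ring
      · rw [← hbb]; push_cast; ring
    have hsum₁C : ∀ j, ∑ i, S₁ i j = 1 := by
      intro j
      rw [hS₁]
      simp only [Matrix.map_apply]
      rw [← Complex.ofReal_sum, hT₁col j, Complex.ofReal_one]
    have hsum₂C : ∀ j, ∑ i, S₂ i j = 1 := by
      intro j
      rw [hS₂]
      simp only [Matrix.map_apply]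
      rw [← Complex.ofReal_sum, hT₂col j, Complex.ofReal_one]
    have huS : uC ᵥ* S₁ = uC := by
      funext j
      show ∑ i, uC i * S₁ i j = uC j
      simp only [huC]
      rw [← Finset.mul_sum, hsum₁C j, mul_one]
    have hvS : vC ᵥ* S₂ = vC := by
      funext j
      show ∑ i, vC i * S₂ i j = vC j
      simp only [hvC]
      rw [← Finset.mul_sum, hsum₂C j, mul_one]
    have huu : uC ⬝ᵥ uC = 1 := by
      show ∑ _i : Fin (m+1), uC _i * uC _i = 1
      simp only [huC]
      rw [Finset.sum_const, Finset.card_univ, Fintype.card_fin, nsmul_eq_mul]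
      rw [← Complex.ofReal_mul, div_mul_div_comm, one_mul, hssm]
      push_cast
      have hne0 : ((m:ℂ) + 1) ≠ 0 := by exact_mod_cast hM.ne'
      field_simp
    have hvv : vC ⬝ᵥ vC = 1 := by
      show ∑ _i : Fin (n+1), vC _i * vC _i = 1
      simp only [hvC]
      rw [Finset.sum_const, Finset.card_univ, Fintype.card_fin, nsmul_eq_mul]
      rw [← Complex.ofReal_mul, div_mul_div_comm, one_mul, hssn]
      push_cast
      have hne0 : ((n:ℂ) + 1) ≠ 0 := by exact_mod_cast hN.ne'
      field_simp
    -- roots of scaled charpolys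
    have hq₁ : (aC • S₁).charpoly.roots = aC ::ₘ Finset.univ.val.map (fun i => aC * lam i) := by
      rw [my_roots_charpoly_smul, hspec₁, Multiset.map_cons, mul_one, Multiset.map_map]
      rfl
    have hq₂ : (bC • S₂).charpoly.roots = bC ::ₘ Finset.univ.val.map (fun i => bC * mu i) := by
      rw [my_roots_charpoly_smul, hspec₂, Multiset.map_cons, mul_one, Multiset.map_map]
      rfl
    have hp0 : (D.map Complex.ofReal).charpoly ≠ 0 := (Matrix.charpoly_monic _).ne_zero
    have hq₁0 : (aC • S₁).charpoly ≠ 0 := (Matrix.charpoly_monic _).ne_zero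
    have hq₂0 : (bC • S₂).charpoly ≠ 0 := (Matrix.charpoly_monic _).ne_zero
    have h1C : aC + bC = 1 + tC := by
      rw [haC, hbC, htC]
      exact_mod_cast congrArg (fun y : ℝ => (y : ℂ)) hsum
    have h2C : aC * bC - rC^2 = tC := by
      rw [haC, hbC, hrC, htC]
      exact_mod_cast congrArg (fun y : ℝ => (y : ℂ)) hprod
    have hquad : ((X : ℂ[X]) - C aC) * (X - C bC) - C (rC^2) = (X - C 1) * (X - C tC) := by
      have e1 : C aC + C bC = C (1:ℂ) + C tC := by rw [← Polynomial.C_add, ← Polynomial.C_add, h1C]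
      have e2 : C aC * C bC - C (rC^2) = C tC := by
        rw [← Polynomial.C_mul, ← Polynomial.C_sub, h2C]
      calc ((X : ℂ[X]) - C aC) * (X - C bC) - C (rC^2)
          = X^2 - (C aC + C bC) * X + (C aC * C bC - C (rC^2)) := by ring
        _ = X^2 - (C (1:ℂ) + C tC) * X + C tC := by rw [e1, e2]
        _ = (X - C 1) * (X - C tC) := by rw [Polynomial.C_1]; ring
    -- the main polynomial identity
    have hpoly : (D.map Complex.ofReal).charpoly * ((X - C aC) * (X - C bC)) =
        ((X - C 1) * (X - C tC)) * ((aC • S₁).charpoly * (bC • S₂).charpoly) := by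
      rw [← hquad]
      apply Polynomial.eq_of_infinite_eval_eq
      have hfin : {x : ℂ | x ∈ ((aC • S₁).charpoly.roots + (bC • S₂).charpoly.roots
          + (aC ::ₘ {bC}))}.Finite := Multiset.finite_toSet _
      refine Set.Infinite.mono ?_ hfin.infinite_compl
      intro x hx
      simp only [Set.mem_compl_iff, Set.mem_setOf_eq, Multiset.mem_add, Multiset.mem_cons,
        Multiset.mem_singleton] at hx
      push_neg at hx
      obtain ⟨⟨hx1, hx2⟩, hxa, hxb⟩ := hx
      have hd1 : IsUnit ((x • (1 : Matrix (Fin (m+1)) (Fin (m+1)) ℂ)) - aC • S₁).det := by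
        rw [← my_eval_charpoly]
        refine isUnit_iff_ne_zero.mpr fun h => hx1 ?_
        exact Polynomial.mem_roots'.mpr ⟨hq₁0, h⟩
      have hd2 : IsUnit ((x • (1 : Matrix (Fin (n+1)) (Fin (n+1)) ℂ)) - bC • S₂).det := by
        rw [← my_eval_charpoly]
        refine isUnit_iff_ne_zero.mpr fun h => hx2 ?_
        exact Polynomial.mem_roots'.mpr ⟨hq₂0, h⟩
      show Polynomial.eval x _ = Polynomial.eval x _
      simp only [eval_mul, eval_sub, eval_X, eval_C]
      rw [my_eval_charpoly, my_eval_charpoly, my_eval_charpoly, hDC]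
      rw [det_point_identity S₁ S₂ uC vC aC bC rC x huS huu hvS hvv hxa hxb hd1 hd2]
      ring
    -- extract roots
    have hXa : ((X : ℂ[X]) - C aC) ≠ 0 := X_sub_C_ne_zero aC
    have hXb : ((X : ℂ[X]) - C bC) ≠ 0 := X_sub_C_ne_zero bC
    have hX1 : ((X : ℂ[X]) - C 1) ≠ 0 := X_sub_C_ne_zero 1
    have hXt : ((X : ℂ[X]) - C tC) ≠ 0 := X_sub_C_ne_zero tC
    have hL : ((D.map Complex.ofReal).charpoly * ((X - C aC) * (X - C bC))).roots =
        (D.map Complex.ofReal).charpoly.roots + ({aC} + {bC}) := by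
      rw [Polynomial.roots_mul (mul_ne_zero hp0 (mul_ne_zero hXa hXb)),
        Polynomial.roots_mul (mul_ne_zero hXa hXb), roots_X_sub_C, roots_X_sub_C]
    have hR : (((X - C 1) * (X - C tC)) * ((aC • S₁).charpoly * (bC • S₂).charpoly)).roots =
        ({(1:ℂ)} + {tC}) + (((aC • S₁).charpoly).roots + ((bC • S₂).charpoly).roots) := by
      rw [Polynomial.roots_mul (mul_ne_zero (mul_ne_zero hX1 hXt) (mul_ne_zero hq₁0 hq₂0)),
        Polynomial.roots_mul (mul_ne_zero hX1 hXt),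
        Polynomial.roots_mul (mul_ne_zero hq₁0 hq₂0), roots_X_sub_C, roots_X_sub_C]
    have hE : (D.map Complex.ofReal).charpoly.roots + ({aC} + {bC}) =
        ({(1:ℂ)} + {tC}) + ((aC ::ₘ Finset.univ.val.map (fun i => aC * lam i)) +
          (bC ::ₘ Finset.univ.val.map (fun i => bC * mu i))) := by
      rw [← hL, hpoly, hR, hq₁, hq₂]
    have hE2 : (D.map Complex.ofReal).charpoly.roots + ({aC} + {bC}) =
        ({(1:ℂ)} + ({tC} + (Finset.univ.val.map (fun i => aC * lam i) +
          Finset.univ.val.map (fun i => bC * mu i)))) + ({aC} + {bC}) := by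
      rw [hE]
      simp only [← Multiset.singleton_add]
      abel
    have final := add_right_cancel hE2
    rw [Multiset.singleton_add, Multiset.singleton_add] at final
    exact final
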